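/- Let d, r, g be real-valued continuous functions on [t₀,∞) with d(t) > 0. Suppose that for every T ≥ t₀ there exist T ≤ s₁ < t₁ ≤ s₂ < t₂ such that g(t) ≤ 0 for t ∈ [s₁,t₁] and g(t) ≥ 0 for t ∈ [s₂,t₂], and that for i = 1,2 there exists a continuously differentiable function u on [s_i,t_i] with u not identically zero, u(s_i) = u(t_i) = 0, and ∫_{s_i}^{t_i} (r(τ)u(τ)² − d(τ)u'(τ)²) dτ ≥ 0. Then the equation (d(t)φ')' + r(t)φ = g(t), t ≥ t₀, is oscillatory. -/

import Mathlib

open MeasureTheory Real Set intervalIntegral Filter Topology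

private lemma nonneg_cont_integral_zero {F : ℝ → ℝ} {a b : ℝ} (hab : a ≤ b)
    (hF : ContinuousOn F (Icc a b)) (hnn : ∀ t ∈ Icc a b, 0 ≤ F t)
    (hz : (∫ t in a..b, F t) = 0) : ∀ t ∈ Ioo a b, F t = 0 := by
  have hint : IntervalIntegrable F volume a b :=
    ContinuousOn.intervalIntegrable (by rwa [uIcc_of_le hab])
  have hzero : ∀ x ∈ Icc a b, (∫ t in a..x, F t) = 0 := by
    intro x hx
    have h1 : IntervalIntegrable F volume a x := hint.mono_set (by
      rw [uIcc_of_le hab, uIcc_of_le hx.1]; exact Icc_subset_Icc le_rfl hx.2)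
    have h2 : IntervalIntegrable F volume x b := hint.mono_set (by
      rw [uIcc_of_le hab, uIcc_of_le hx.2]; exact Icc_subset_Icc hx.1 le_rfl)
    have hadd : (∫ t in a..x, F t) + (∫ t in x..b, F t) = ∫ t in a..b, F t :=
      integral_add_adjacent_intervals h1 h2
    have n1 : 0 ≤ ∫ t in a..x, F t :=
      integral_nonneg hx.1 (fun t ht => hnn t ⟨ht.1, le_trans ht.2 hx.2⟩)
    have n2 : 0 ≤ ∫ t in x..b, F t :=
      integral_nonneg hx.2 (fun t ht => hnn t ⟨le_trans hx.1 ht.1, ht.2⟩)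
    linarith [hz ▸ hadd]
  intro x hx
  have hxmem : Icc a b ∈ 𝓝 x := Icc_mem_nhds hx.1 hx.2
  have hca : ContinuousAt F x := hF.continuousAt hxmem
  have h1 : IntervalIntegrable F volume a x := hint.mono_set (by
    rw [uIcc_of_le hab, uIcc_of_le hx.1.le]; exact Icc_subset_Icc le_rfl hx.2.le)
  have hmeas : StronglyMeasurableAtFilter F (𝓝 x) :=
    ⟨Icc a b, hxmem, hF.aestronglyMeasurable measurableSet_Icc⟩
  have hder : HasDerivAt (fun y => ∫ t in a..y, F t) (F x) x :=
    integral_hasDerivAt_right h1 hmeas hca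
  have hev : (fun y => ∫ t in a..y, F t) =ᶠ[𝓝 x] (fun _ => (0:ℝ)) := by
    filter_upwards [hxmem] with y hy
    exact hzero y hy
  have hder0 : HasDerivAt (fun y => ∫ t in a..y, F t) 0 x :=
    (hasDerivAt_const x (0:ℝ)).congr_of_eventuallyEq hev
  exact hder.unique hder0

private lemma wong_core {a b : ℝ} {d r g φ φd Dd u ud : ℝ → ℝ} (hab : a < b)
    (hd : ContinuousOn d (Icc a b)) (hr : ContinuousOn r (Icc a b))
    (hdpos : ∀ t ∈ Icc a b, 0 < d t)
    (hφ : ∀ t ∈ Icc a b, HasDerivWithinAt φ (φd t) (Icc a b) t)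
    (hφd : ContinuousOn φd (Icc a b))
    (hP : ∀ t ∈ Icc a b, HasDerivWithinAt (fun s => d s * φd s) (Dd t) (Icc a b) t)
    (hDd : ContinuousOn Dd (Icc a b))
    (heq : ∀ t ∈ Icc a b, Dd t + r t * φ t = g t)
    (hφpos : ∀ t ∈ Icc a b, 0 < φ t)
    (hgle : ∀ t ∈ Icc a b, g t ≤ 0)
    (hu : ∀ t ∈ Icc a b, HasDerivWithinAt u (ud t) (Icc a b) t)
    (hud : ContinuousOn ud (Icc a b))
    (hua : u a = 0) (hub : u b = 0)
    (hI : 0 ≤ ∫ τ in a..b, (r τ * u τ ^ 2 - d τ * ud τ ^ 2)) :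
    ∀ t ∈ Icc a b, u t = 0 := by
  have hφc : ContinuousOn φ (Icc a b) := fun t ht => (hφ t ht).continuousWithinAt
  have huc : ContinuousOn u (Icc a b) := fun t ht => (hu t ht).continuousWithinAt
  have hφne : ∀ t ∈ Icc a b, φ t ≠ 0 := fun t ht => ne_of_gt (hφpos t ht)
  set W' : ℝ → ℝ := fun t =>
    ((2 * u t * ud t * (d t * φd t) + u t ^ 2 * Dd t) * φ t
      - u t ^ 2 * (d t * φd t) * φd t) / φ t ^ 2 with hW'def
  have hW : ∀ t ∈ Icc a b, HasDerivWithinAt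
      (fun s => u s ^ 2 * (d s * φd s) / φ s) (W' t) (Icc a b) t := by
    intro t ht
    have h1 : HasDerivWithinAt (fun s => u s ^ 2) (2 * u t * ud t) (Icc a b) t := by
      have := (hu t ht).fun_pow 2
      exact this.congr_deriv (by norm_num)
    have h3 := (h1.mul (hP t ht)).div (hφ t ht) (hφne t ht)
    exact h3
  have hWcont : ContinuousOn (fun s => u s ^ 2 * (d s * φd s) / φ s) (Icc a b) :=
    fun t ht => (hW t ht).continuousWithinAt
  have hW'cont : ContinuousOn W' (Icc a b) := by
    apply ContinuousOn.div
    · exact (((continuousOn_const.mul huc).mul hud).mul (hd.mul hφd) |>.add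
        ((huc.pow 2).mul hDd)).mul hφc |>.sub (((huc.pow 2).mul (hd.mul hφd)).mul hφd)
    · exact hφc.pow 2
    · exact fun t ht => pow_ne_zero 2 (hφne t ht)
  have hW'int : IntervalIntegrable W' volume a b :=
    ContinuousOn.intervalIntegrable (by rwa [uIcc_of_le hab.le])
  have hWzero : (∫ t in a..b, W' t) = 0 := by
    rw [integral_eq_sub_of_hasDeriv_right_of_le hab.le hWcont
      (fun x hx => ((hW x ⟨hx.1.le, hx.2.le⟩).hasDerivAt
        (Icc_mem_nhds hx.1 hx.2)).hasDerivWithinAt) hW'int]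
    simp [hua, hub]
  set F : ℝ → ℝ := fun t => d t * (ud t - u t * φd t / φ t) ^ 2 with hFdef
  set G : ℝ → ℝ := fun t => u t ^ 2 * (-g t) / φ t with hGdef
  have hptw : ∀ t ∈ Icc a b, F t + G t = (d t * ud t ^ 2 - r t * u t ^ 2) - W' t := by
    intro t ht
    have hDdt : Dd t = g t - r t * φ t := by linarith [heq t ht]
    have hφt := hφne t ht
    simp only [hFdef, hGdef, hW'def, hDdt]
    field_simp
    ring
  have hFcont : ContinuousOn F (Icc a b) :=
    hd.mul ((hud.sub ((huc.mul hφd).div hφc hφne)).pow 2)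
  have hgc : ContinuousOn g (Icc a b) := by
    have : ContinuousOn (fun t => Dd t + r t * φ t) (Icc a b) := hDd.add (hr.mul hφc)
    exact this.congr (fun t ht => (heq t ht).symm)
  have hGcont : ContinuousOn G (Icc a b) := ((huc.pow 2).mul hgc.neg).div hφc hφne
  have hHcont : ContinuousOn (fun t => d t * ud t ^ 2 - r t * u t ^ 2) (Icc a b) :=
    (hd.mul (hud.pow 2)).sub (hr.mul (huc.pow 2))
  have hFint : IntervalIntegrable F volume a b :=
    ContinuousOn.intervalIntegrable (by rwa [uIcc_of_le hab.le])
  have hGint : IntervalIntegrable G volume a b :=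
    ContinuousOn.intervalIntegrable (by rwa [uIcc_of_le hab.le])
  have hHint : IntervalIntegrable (fun t => d t * ud t ^ 2 - r t * u t ^ 2) volume a b :=
    ContinuousOn.intervalIntegrable (by rwa [uIcc_of_le hab.le])
  have hsum : (∫ t in a..b, (F t + G t)) ≤ 0 := by
    have e1 : (∫ t in a..b, (F t + G t))
        = ∫ t in a..b, ((d t * ud t ^ 2 - r t * u t ^ 2) - W' t) := by
      apply integral_congr
      intro t ht
      exact hptw t (by rwa [uIcc_of_le hab.le] at ht)
    rw [e1, integral_sub hHint hW'int, hWzero]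
    have e2 : (∫ t in a..b, (d t * ud t ^ 2 - r t * u t ^ 2))
        = - ∫ τ in a..b, (r τ * u τ ^ 2 - d τ * ud τ ^ 2) := by
      rw [← intervalIntegral.integral_neg]
      apply integral_congr
      intro t _
      ring
    rw [e2]
    linarith
  have hFnn : ∀ t ∈ Icc a b, 0 ≤ F t := fun t ht =>
    mul_nonneg (hdpos t ht).le (sq_nonneg _)
  have hGnn : ∀ t ∈ Icc a b, 0 ≤ G t := fun t ht =>
    div_nonneg (mul_nonneg (sq_nonneg _) (by linarith [hgle t ht])) (hφpos t ht).le
  have hFI : (∫ t in a..b, F t) = 0 := by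
    have h1 : 0 ≤ ∫ t in a..b, F t := integral_nonneg hab.le hFnn
    have h2 : 0 ≤ ∫ t in a..b, G t := integral_nonneg hab.le hGnn
    rw [integral_add hFint hGint] at hsum
    linarith
  have hF0 : ∀ t ∈ Ioo a b, F t = 0 := nonneg_cont_integral_zero hab.le hFcont hFnn hFI
  have hudeq : ∀ t ∈ Ioo a b, ud t = u t * φd t / φ t := by
    intro t ht
    have h0 := hF0 t ht
    have htI : t ∈ Icc a b := ⟨ht.1.le, ht.2.le⟩
    have : (ud t - u t * φd t / φ t) ^ 2 = 0 := by
      by_contra hne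
      have := (hdpos t htI).ne'
      simp only [hFdef] at h0
      exact hne (by
        rcases mul_eq_zero.mp h0 with h | h
        · exact absurd h this
        · exact h)
    have := pow_eq_zero_iff (n := 2) (by norm_num) |>.mp this
    linarith [sub_eq_zero.mp this]
  -- now show u vanishes on the interior
  have hinterior : ∀ a' ∈ Ioo a b, u a' = 0 := by
    intro a' ha'
    have hsub : Icc a' b ⊆ Icc a b := Icc_subset_Icc ha'.1.le le_rfl
    have hc : ContinuousOn (fun t => u t / φ t) (Icc a' b) :=
      ((huc.mono hsub).div (hφc.mono hsub) (fun t ht => hφne t (hsub ht)))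
    have hder : ∀ x ∈ Ico a' b, HasDerivWithinAt (fun t => u t / φ t) 0 (Ici x) x := by
      intro x hx
      have hxI : x ∈ Ioo a b := ⟨lt_of_lt_of_le ha'.1 hx.1, hx.2⟩
      have hxIcc : x ∈ Icc a b := ⟨hxI.1.le, hxI.2.le⟩
      have h0 := (hu x hxIcc).div (hφ x hxIcc) (hφne x hxIcc)
      have hval : (ud x * φ x - u x * φd x) / φ x ^ 2 = 0 := by
        rw [hudeq x hxI, div_mul_cancel₀ _ (hφne x hxIcc), sub_self, zero_div]
      rw [hval] at h0
      apply h0.mono_of_mem_nhdsWithin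
      rw [mem_nhdsWithin]
      exact ⟨Iio b, isOpen_Iio, hxI.2, fun y hy => ⟨le_trans hxIcc.1 hy.2, hy.1.le⟩⟩
    have hconst := constant_of_has_deriv_right_zero hc hder b ⟨ha'.2.le, le_rfl⟩
    have hb0 : u b / φ b = 0 := by simp [hub]
    have ha0 : u a' / φ a' = 0 := by rw [← hconst, hb0]
    exact (div_eq_zero_iff.mp ha0).resolve_right (hφne a' ⟨ha'.1.le, ha'.2.le⟩)
  intro t ht
  rcases eq_or_lt_of_le ht.1 with h1 | h1
  · rwa [← h1]
  rcases eq_or_lt_of_le ht.2 with h2 | h2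
  · rwa [h2]
  exact hinterior t ⟨h1, h2⟩


/-- `φ` is a solution of the forced second order linear ordinary differential equation
`(d φ')' + r φ = g` on `[t₀, ∞)`: `φ` is continuously differentiable on `[t₀, ∞)` with
derivative `φd`, `d·φd` is continuously differentiable on `[t₀, ∞)` with derivative `Dd`,
and the equation holds everywhere on `[t₀, ∞)`. -/
def IsODESolution (t₀ : ℝ) (d r g : ℝ → ℝ) (φ : ℝ → ℝ) : Prop :=
  ∃ φd Dd : ℝ → ℝ,
    (∀ t ∈ Ici t₀, HasDerivWithinAt φ (φd t) (Ici t₀) t) ∧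
    ContinuousOn φd (Ici t₀) ∧
    (∀ t ∈ Ici t₀, HasDerivWithinAt (fun s => d s * φd s) (Dd t) (Ici t₀) t) ∧
    ContinuousOn Dd (Ici t₀) ∧
    ∀ t ∈ Ici t₀, Dd t + r t * φ t = g t

/-- Theorem 1.1 (Wong's oscillation criterion): under the stated sign conditions on the
forcing term `g` and the variational conditions with test functions `u`, every solution of
`(d φ')' + r φ = g` on `[t₀, ∞)` has arbitrarily large zeroes. -/
theorem stmt12 (t₀ : ℝ) (d r g : ℝ → ℝ)
    (hd : ContinuousOn d (Ici t₀)) (hr : ContinuousOn r (Ici t₀))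
    (hg : ContinuousOn g (Ici t₀))
    (hdpos : ∀ t ∈ Ici t₀, 0 < d t)
    (hyp : ∀ T, t₀ ≤ T → ∃ s₁ u₁ s₂ u₂ : ℝ,
      T ≤ s₁ ∧ s₁ < u₁ ∧ u₁ ≤ s₂ ∧ s₂ < u₂ ∧
      (∀ t ∈ Icc s₁ u₁, g t ≤ 0) ∧ (∀ t ∈ Icc s₂ u₂, 0 ≤ g t) ∧
      (∃ u ud : ℝ → ℝ,
        (∀ t ∈ Icc s₁ u₁, HasDerivWithinAt u (ud t) (Icc s₁ u₁) t) ∧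
        ContinuousOn ud (Icc s₁ u₁) ∧
        (∃ t ∈ Icc s₁ u₁, u t ≠ 0) ∧ u s₁ = 0 ∧ u u₁ = 0 ∧
        0 ≤ ∫ τ in s₁..u₁, (r τ * u τ ^ 2 - d τ * ud τ ^ 2)) ∧
      (∃ u ud : ℝ → ℝ,
        (∀ t ∈ Icc s₂ u₂, HasDerivWithinAt u (ud t) (Icc s₂ u₂) t) ∧
        ContinuousOn ud (Icc s₂ u₂) ∧
        (∃ t ∈ Icc s₂ u₂, u t ≠ 0) ∧ u s₂ = 0 ∧ u u₂ = 0 ∧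
        0 ≤ ∫ τ in s₂..u₂, (r τ * u τ ^ 2 - d τ * ud τ ^ 2))) :
    ∀ φ : ℝ → ℝ, IsODESolution t₀ d r g φ → ∀ T : ℝ, ∃ t, T ≤ t ∧ φ t = 0 := by
  rintro φ ⟨φd, Dd, hφ, hφd, hP, hDd, heq⟩ T
  by_contra hcon
  push_neg at hcon
  set T' := max T t₀ with hT'def
  have hT't₀ : t₀ ≤ T' := le_max_right _ _
  have hT'T : T ≤ T' := le_max_left _ _
  have hφc : ContinuousOn φ (Ici t₀) := fun t ht => (hφ t ht).continuousWithinAt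
  have hne : ∀ t, T' ≤ t → φ t ≠ 0 := fun t ht => hcon t (le_trans hT'T ht)
  have hmemI : ∀ t, T' ≤ t → t ∈ Ici t₀ := fun t ht => le_trans hT't₀ ht
  -- sign is constant on [T', ∞)
  have hsign : (∀ t, T' ≤ t → 0 < φ t) ∨ (∀ t, T' ≤ t → φ t < 0) := by
    rcases lt_or_gt_of_ne (hne T' le_rfl) with hneg | hpos
    · right
      intro t ht
      by_contra hle
      push_neg at hle
      have hlt : 0 < φ t := lt_of_le_of_ne hle (hne t ht).symm
      have hcont : ContinuousOn φ (Icc T' t) :=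
        hφc.mono (fun y hy => le_trans hT't₀ hy.1)
      have : (0:ℝ) ∈ Icc (φ T') (φ t) := ⟨hneg.le, hlt.le⟩
      obtain ⟨s, hs, hs0⟩ := intermediate_value_Icc ht hcont this
      exact hne s hs.1 hs0
    · left
      intro t ht
      by_contra hle
      push_neg at hle
      have hlt : φ t < 0 := lt_of_le_of_ne hle (hne t ht)
      have hcont : ContinuousOn φ (Icc T' t) :=
        hφc.mono (fun y hy => le_trans hT't₀ hy.1)
      have : (0:ℝ) ∈ Icc (φ t) (φ T') := ⟨hlt.le, hpos.le⟩
      obtain ⟨s, hs, hs0⟩ := intermediate_value_Icc' ht hcont this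
      exact hne s hs.1 hs0
  obtain ⟨s₁, u₁, s₂, u₂, hTs₁, hs₁u₁, hu₁s₂, hs₂u₂, hgneg, hgpos, H₁, H₂⟩ := hyp T' hT't₀
  have hs₂T' : T' ≤ s₂ := le_trans hTs₁ (le_trans hs₁u₁.le hu₁s₂)
  rcases hsign with hpos | hneg
  · -- φ > 0 on [T',∞): use interval [s₁, u₁]
    obtain ⟨u, ud, hu, hud, ⟨tz, htz, htzne⟩, hua, hub, hI⟩ := H₁
    have hsub : Icc s₁ u₁ ⊆ Ici t₀ := fun y hy => le_trans hT't₀ (le_trans hTs₁ hy.1)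
    refine htzne (wong_core hs₁u₁ (hd.mono hsub) (hr.mono hsub)
      (fun t ht => hdpos t (hsub ht))
      (fun t ht => (hφ t (hsub ht)).mono hsub) (hφd.mono hsub)
      (fun t ht => (hP t (hsub ht)).mono hsub) (hDd.mono hsub)
      (fun t ht => heq t (hsub ht))
      (fun t ht => hpos t (le_trans hTs₁ ht.1))
      hgneg hu hud hua hub hI tz htz)
  · -- φ < 0 on [T',∞): use interval [s₂, u₂] with -φ, -g
    obtain ⟨u, ud, hu, hud, ⟨tz, htz, htzne⟩, hua, hub, hI⟩ := H₂
    have hsub : Icc s₂ u₂ ⊆ Ici t₀ := fun y hy => le_trans hT't₀ (le_trans hs₂T' hy.1)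
    refine htzne (wong_core (g := fun t => -g t) (φ := fun t => -φ t)
      (φd := fun t => -φd t) (Dd := fun t => -Dd t)
      hs₂u₂ (hd.mono hsub) (hr.mono hsub)
      (fun t ht => hdpos t (hsub ht))
      (fun t ht => ((hφ t (hsub ht)).mono hsub).neg)
      (hφd.mono hsub).neg
      (fun t ht => (((hP t (hsub ht)).mono hsub).neg).congr
        (fun y _ => by simp) (by simp))
      (hDd.mono hsub).neg
      (fun t ht => by have := heq t (hsub ht); linarith)
      (fun t ht => by simpa using (hneg t (le_trans hs₂T' ht.1)))
      (fun t ht => by simpa using hgpos t ht)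
      hu hud hua hub hI tz htz)
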